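/- Let f(t) = 2 e^{t/4} ∫_{-∞}^{√(t/2)} (1/√(2π)) e^{-y²/2} dy. Then for all t ≥ 0, ∑_{k=0}^∞ (t/4)^{k/2} / Γ((k+2)/2) = f(t), i.e., the series ∑_{n=1}^∞ λ^{n-1}/Γ((n+1)/2) with λ = √(t/4) equals f(t). -/

import Mathlib

open MeasureTheory Real

/-- `f(t) = 2 e^{t/4} ∫_{-∞}^{√(t/2)} (1/√(2π)) e^{-y²/2} dy`. -/
noncomputable def fGauss (t : ℝ) : ℝ :=
  2 * Real.exp (t / 4) *
    ∫ y in Set.Iic (Real.sqrt (t / 2)), (Real.sqrt (2 * π))⁻¹ * Real.exp (-y ^ 2 / 2)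

open Set

private lemma hasSum_exp_div (x : ℝ) :
    HasSum (fun n : ℕ => x ^ n / (Nat.factorial n : ℝ)) (Real.exp x) := by
  rw [Real.exp_eq_exp_ℝ]
  exact NormedSpace.expSeries_div_hasSum_exp x

/-- Gaussian moments on the half line. -/
private lemma moment_eq (k : ℕ) :
    ∫ s in Ioi (0:ℝ), s ^ k * Real.exp (-s ^ 2 / 2)
      = 2 ^ (((k : ℝ) - 1) / 2) * Real.Gamma (((k : ℝ) + 1) / 2) := by
  have h := integral_rpow_mul_exp_neg_mul_rpow (p := 2) (q := (k : ℝ)) (b := 1/2)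
      two_pos (by linarith [Nat.cast_nonneg (α := ℝ) k]) one_half_pos
  have h1 : ∫ x in Ioi (0:ℝ), x ^ (k:ℝ) * Real.exp (-(1/2) * x ^ (2:ℝ))
      = ∫ s in Ioi (0:ℝ), s ^ k * Real.exp (-s ^ 2 / 2) := by
    refine setIntegral_congr_fun measurableSet_Ioi (fun x hx => ?_)
    have hx2 : x ^ (2:ℝ) = x ^ (2:ℕ) := by
      rw [show (2:ℝ) = ((2:ℕ):ℝ) by norm_num, Real.rpow_natCast]
    rw [Real.rpow_natCast x k, hx2]
    have : -(1/2 : ℝ) * x ^ (2:ℕ) = -x ^ (2:ℕ) / 2 := by ring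
    rw [this]
  have h2 : ((1:ℝ)/2) ^ (-((k:ℝ)+1)/2) * (1/2) = 2 ^ (((k : ℝ) - 1) / 2) := by
    have e1 : ((1:ℝ)/2) = 2 ^ (-1 : ℝ) := by
      rw [Real.rpow_neg_one]; norm_num
    rw [e1, ← Real.rpow_mul (by norm_num : (0:ℝ) ≤ 2), ← Real.rpow_add two_pos]
    congr 1
    ring
  rw [← h1, h, ← h2]
  try ring
private lemma gamma_pos (x : ℝ) (hx : 0 < x) : 0 < Real.Gamma x := Real.Gamma_pos_of_pos hx

/-- The key termwise identity, via the Legendre duplication formula. -/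
private lemma term_eq (a : ℝ) (k : ℕ) :
    a ^ k / Real.Gamma (((k:ℝ) + 2) / 2)
      = (Real.sqrt 2 * a) ^ k / (Nat.factorial k : ℝ)
          * (2 ^ (((k : ℝ) - 1) / 2) * Real.Gamma (((k : ℝ) + 1) / 2))
          * (2 / Real.sqrt (2 * π)) := by
  have hdup := Real.Gamma_mul_Gamma_add_half (((k:ℝ) + 1) / 2)
  have e1 : ((k:ℝ) + 1) / 2 + 1/2 = ((k:ℝ) + 2) / 2 := by ring
  have e2 : 2 * (((k:ℝ) + 1) / 2) = (k:ℝ) + 1 := by ring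
  rw [e1, e2, Real.Gamma_nat_eq_factorial k] at hdup
  -- hdup : Γ((k+1)/2) * Γ((k+2)/2) = k! * 2 ^ (1 - 2*((k+1)/2))... careful: exponent 1 - (k+1)
  have hG1 : 0 < Real.Gamma (((k:ℝ) + 1) / 2) := gamma_pos _ (by positivity)
  have hG2 : 0 < Real.Gamma (((k:ℝ) + 2) / 2) := gamma_pos _ (by positivity)
  have hfac : (0:ℝ) < (Nat.factorial k : ℝ) := by exact_mod_cast Nat.factorial_pos k
  have hsqrtpi : 0 < Real.sqrt π := Real.sqrt_pos.mpr Real.pi_pos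
  -- powers of 2
  have hsqrt2 : Real.sqrt 2 = 2 ^ ((1:ℝ)/2) := Real.sqrt_eq_rpow 2
  have hpow : (Real.sqrt 2) ^ k = 2 ^ ((k:ℝ)/2) := by
    rw [hsqrt2, ← Real.rpow_natCast (2 ^ ((1:ℝ)/2)) k, ← Real.rpow_mul (by norm_num)]
    norm_num
    ring_nf
  have hsplit : Real.sqrt (2 * π) = Real.sqrt 2 * Real.sqrt π :=
    Real.sqrt_mul (by norm_num) π
  have hexp : (1 : ℝ) - ((k:ℝ) + 1) = -(k:ℝ) := by ring
  rw [hexp] at hdup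
  have hradd : ∀ x y : ℝ, (2:ℝ) ^ x * (2:ℝ) ^ y = 2 ^ (x + y) := fun x y =>
    (Real.rpow_add two_pos x y).symm
  have key : (2:ℝ) ^ ((k:ℝ)/2) * 2 ^ (((k:ℝ)-1)/2) * 2 = (2:ℝ) ^ k * 2 ^ ((1:ℝ)/2) := by
    calc (2:ℝ) ^ ((k:ℝ)/2) * 2 ^ (((k:ℝ)-1)/2) * 2
        = 2 ^ ((k:ℝ)/2) * 2 ^ (((k:ℝ)-1)/2) * 2 ^ (1:ℝ) := by rw [Real.rpow_one]
      _ = 2 ^ ((k:ℝ)/2 + ((k:ℝ)-1)/2 + 1) := by rw [hradd, hradd]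
      _ = 2 ^ ((k:ℝ) + 1/2) := by congr 1; ring
      _ = 2 ^ ((k:ℝ)) * 2 ^ ((1:ℝ)/2) := by rw [hradd]
      _ = 2 ^ k * 2 ^ ((1:ℝ)/2) := by rw [Real.rpow_natCast]
  have hnegk : (2:ℝ) ^ (-(k:ℝ)) = ((2:ℝ) ^ k)⁻¹ := by
    rw [Real.rpow_neg (by norm_num), Real.rpow_natCast]
  have hGamma2 : Real.Gamma (((k:ℝ) + 2) / 2)
      = (Nat.factorial k : ℝ) * ((2:ℝ) ^ k)⁻¹ * Real.sqrt π / Real.Gamma (((k:ℝ) + 1) / 2) := by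
    rw [eq_div_iff (ne_of_gt hG1), ← hnegk]
    linear_combination hdup
  rw [hGamma2, mul_pow, hpow, hsplit, hsqrt2]
  have h2kpos : (0:ℝ) < 2 ^ k := by positivity
  have hpow2 : (0:ℝ) < 2 ^ ((1:ℝ)/2) := Real.rpow_pos_of_pos two_pos _
  field_simp
  linear_combination (-(a ^ k)) * key

/-- Interchanging sum and integral. -/
private lemma sum_integral (c : ℝ) (hc : 0 ≤ c) :
    ∑' k : ℕ, (c ^ k / (Nat.factorial k : ℝ) * ∫ s in Ioi (0:ℝ), s ^ k * Real.exp (-s ^ 2 / 2))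
      = ∫ s in Ioi (0:ℝ), Real.exp (c * s - s ^ 2 / 2) := by
  set F : ℕ → ℝ → ℝ := fun k s => (c * s) ^ k / (Nat.factorial k : ℝ) * Real.exp (-s ^ 2 / 2)
    with hF
  have hmeas : ∀ k, AEStronglyMeasurable (F k) (volume.restrict (Ioi 0)) := by
    intro k
    exact ((continuous_const.mul continuous_id).pow k |>.div_const _ |>.mul
      (((continuous_pow 2).neg.div_const 2).rexp)).aestronglyMeasurable
  have hsum : ∀ s : ℝ, HasSum (fun k => F k s) (Real.exp (c * s - s ^ 2 / 2)) := by
    intro s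
    have h := (hasSum_exp_div (c * s)).mul_right (Real.exp (-s ^ 2 / 2))
    have : Real.exp (c * s) * Real.exp (-s ^ 2 / 2) = Real.exp (c * s - s ^ 2 / 2) := by
      rw [← Real.exp_add]; ring_nf
    rwa [this] at h
  have hint : IntegrableOn (fun s : ℝ => Real.exp (c * s - s ^ 2 / 2)) (Ioi 0) := by
    have h1 : Integrable (fun s : ℝ => Real.exp (c^2/2) * Real.exp (-(1/2) * (s - c)^2)) :=
      ((integrable_exp_neg_mul_sq one_half_pos).comp_sub_right c).const_mul _
    have h2 : (fun s : ℝ => Real.exp (c^2/2) * Real.exp (-(1/2) * (s - c)^2))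
        = fun s : ℝ => Real.exp (c * s - s ^ 2 / 2) := by
      funext s; rw [← Real.exp_add]; congr 1; ring
    rw [h2] at h1
    exact h1.integrableOn
  have hbound : (∑' k, ∫⁻ s in Ioi (0:ℝ), ‖F k s‖₊) ≠ ⊤ := by
    rw [← lintegral_tsum (f := fun k s => (‖F k s‖₊ : ENNReal)) (fun k => (hmeas k).enorm)]
    have heq : ∫⁻ s in Ioi (0:ℝ), ∑' k, (‖F k s‖₊ : ENNReal)
        = ∫⁻ s in Ioi (0:ℝ), ENNReal.ofReal (Real.exp (c * s - s ^ 2 / 2)) := by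
      refine setLIntegral_congr_fun measurableSet_Ioi (
        (fun s hs => ?_))
      have hnn : ∀ k, 0 ≤ F k s := by
        intro k
        have : 0 ≤ c * s := mul_nonneg hc (le_of_lt hs)
        positivity
      have : ∀ k, (‖F k s‖₊ : ENNReal) = ENNReal.ofReal (F k s) := fun k =>
        Real.enorm_eq_ofReal (hnn k)
      simp_rw [this]
      rw [← ENNReal.ofReal_tsum_of_nonneg hnn (hsum s).summable, (hsum s).tsum_eq]
    rw [heq]
    exact hint.setLIntegral_lt_top.ne
  have hswap := integral_tsum hmeas hbound
  have hL : ∫ s in Ioi (0:ℝ), ∑' k, F k s = ∫ s in Ioi (0:ℝ), Real.exp (c * s - s ^ 2 / 2) := by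
    refine setIntegral_congr_fun measurableSet_Ioi (fun s _ => ?_)
    exact (hsum s).tsum_eq
  have hR : ∀ k : ℕ, ∫ s in Ioi (0:ℝ), F k s
      = c ^ k / (Nat.factorial k : ℝ) * ∫ s in Ioi (0:ℝ), s ^ k * Real.exp (-s ^ 2 / 2) := by
    intro k
    rw [← integral_const_mul]
    refine setIntegral_congr_fun measurableSet_Ioi (fun s _ => ?_)
    rw [hF]; simp only [mul_pow]; ring
  rw [hL] at hswap
  rw [hswap]
  exact tsum_congr fun k => (hR k).symm

/-- Translating the Gaussian integral. -/
private lemma shift_integral (c : ℝ) :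
    ∫ s in Ioi (0:ℝ), Real.exp (c * s - s ^ 2 / 2)
      = Real.exp (c ^ 2 / 2) * ∫ y in Iic c, Real.exp (-y ^ 2 / 2) := by
  have mp : MeasurePreserving (fun s : ℝ => c - s) volume volume :=
    Measure.measurePreserving_sub_left volume c
  have me : MeasurableEmbedding (fun s : ℝ => c - s) := by
    have h := ((Homeomorph.neg ℝ).trans
      (Homeomorph.addLeft c)).isClosedEmbedding.measurableEmbedding
    have : (⇑((Homeomorph.neg ℝ).trans (Homeomorph.addLeft c))) = fun s : ℝ => c - s := by
      funext s
      simp [sub_eq_add_neg]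
    rwa [this] at h
  have h := mp.setIntegral_preimage_emb me (fun y => Real.exp (-y ^ 2 / 2)) (Iic c)
  have hpre : (fun s : ℝ => c - s) ⁻¹' (Iic c) = Ici 0 := by
    ext s
    simp only [mem_preimage, mem_Iic, mem_Ici, sub_le_self_iff]
  rw [hpre] at h
  rw [← h, integral_Ici_eq_integral_Ioi, ← integral_const_mul]
  refine setIntegral_congr_fun measurableSet_Ioi (fun s _ => ?_)
  rw [← Real.exp_add]
  congr 1
  ring

/-- For all `t ≥ 0`, `∑_{k=0}^∞ (t/4)^{k/2} / Γ((k+2)/2) = f(t)`. -/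
theorem series_eq_fGauss (t : ℝ) (ht : 0 ≤ t) :
    (∑' k : ℕ, (t / 4) ^ ((k : ℝ) / 2) / Real.Gamma ((k + 2) / 2)) = fGauss t := by
  have ht4 : 0 ≤ t / 4 := by linarith
  set a : ℝ := Real.sqrt (t / 4) with ha_def
  have ha : 0 ≤ a := Real.sqrt_nonneg _
  have ha2 : a ^ 2 = t / 4 := Real.sq_sqrt ht4
  set c : ℝ := Real.sqrt 2 * a with hc_def
  have hc : 0 ≤ c := mul_nonneg (Real.sqrt_nonneg 2) ha
  have hcsq : c ^ 2 / 2 = t / 4 := by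
    rw [hc_def, mul_pow, Real.sq_sqrt (by norm_num : (0:ℝ) ≤ 2), ha2]
    ring
  have hsqrt : Real.sqrt (t / 2) = c := by
    rw [hc_def, ha_def, show t / 2 = 2 * (t / 4) by ring,
      Real.sqrt_mul (by norm_num : (0:ℝ) ≤ 2)]
  have hrpow : ∀ k : ℕ, (t / 4) ^ ((k : ℝ) / 2) = a ^ k := by
    intro k
    rw [show ((k:ℝ)/2) = (1/2) * k by ring, Real.rpow_mul ht4, Real.rpow_natCast,
      ha_def, ← Real.sqrt_eq_rpow]
  calc
    (∑' k : ℕ, (t / 4) ^ ((k : ℝ) / 2) / Real.Gamma ((k + 2) / 2))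
        = ∑' k : ℕ, (c ^ k / (Nat.factorial k : ℝ)
            * ∫ s in Ioi (0:ℝ), s ^ k * Real.exp (-s ^ 2 / 2)) * (2 / Real.sqrt (2 * π)) := by
          refine tsum_congr fun k => ?_
          rw [hrpow k, term_eq a k, moment_eq k, hc_def]
    _ = (∑' k : ℕ, (c ^ k / (Nat.factorial k : ℝ)
            * ∫ s in Ioi (0:ℝ), s ^ k * Real.exp (-s ^ 2 / 2))) * (2 / Real.sqrt (2 * π)) :=
          tsum_mul_right
    _ = (∫ s in Ioi (0:ℝ), Real.exp (c * s - s ^ 2 / 2)) * (2 / Real.sqrt (2 * π)) := by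
          rw [sum_integral c hc]
    _ = (Real.exp (c ^ 2 / 2) * ∫ y in Iic c, Real.exp (-y ^ 2 / 2))
            * (2 / Real.sqrt (2 * π)) := by rw [shift_integral c]
    _ = fGauss t := by
          rw [fGauss, hsqrt, hcsq, integral_const_mul]
          ring
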